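/- For every integer r ≥ 3, (r-1)·log(r/(r-1)) + 2·((1/(r-2))·log((r-2)!) − log(r-1)) < 0. -/

import Mathlib

/-- AM-GM style bound: log(n!) ≤ n · log((n+1)/2). -/
lemma log_fact_le (n : ℕ) :
    Real.log (n.factorial) ≤ n * Real.log ((n + 1) / 2) := by
  induction n with
  | zero => simp
  | succ n ih =>
    have hpos : (0:ℝ) < n + 1 := by positivity
    have hpos2 : (0:ℝ) < n + 2 := by positivity
    have hfact : (Nat.factorial (n+1) : ℝ) = (n+1) * n.factorial := by
      push_cast [Nat.factorial_succ]; ring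
    have hlog : Real.log ((n+1).factorial) = Real.log (n+1) + Real.log (n.factorial) := by
      rw [hfact, Real.log_mul (by positivity) (by positivity)]
    -- key: log 2 ≤ (n+1) * log ((n+2)/(n+1))
    have hkey : Real.log 2 ≤ (n + 1 : ℝ) * Real.log ((n + 2) / (n + 1)) := by
      have hx : (2:ℝ) ≤ ((n + 2 : ℝ) / (n + 1)) ^ (n + 1) := by
        have h0 : (0:ℝ) ≤ 1 / ((n:ℝ) + 1) := by positivity
        have h := one_add_mul_le_pow (show (-2:ℝ) ≤ 1 / ((n:ℝ) + 1) by linarith) (n + 1)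
        push_cast at h
        have h1 : (1 : ℝ) + ((n:ℝ) + 1) * (1 / ((n:ℝ) + 1)) = 2 := by
          field_simp
          norm_num
        have h2 : (1 : ℝ) + 1 / ((n:ℝ) + 1) = ((n:ℝ) + 2) / ((n:ℝ) + 1) := by
          field_simp; ring
        rw [h1, h2] at h
        exact h
      calc Real.log 2 ≤ Real.log (((n + 2 : ℝ) / (n + 1)) ^ (n + 1)) :=
            Real.log_le_log (by norm_num) hx
        _ = (n + 1 : ℝ) * Real.log ((n + 2) / (n + 1)) := by
            rw [Real.log_pow]; push_cast; ring
    have e1 : Real.log ((n + 1 : ℝ) / 2) = Real.log (n + 1) - Real.log 2 :=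
      Real.log_div (by positivity) (by norm_num)
    have e2 : Real.log (((n:ℝ) + 1 + 1) / 2) = Real.log (n + 2) - Real.log 2 := by
      rw [show ((n:ℝ) + 1 + 1) = (n:ℝ) + 2 by ring]
      exact Real.log_div (by positivity) (by norm_num)
    have e3 : Real.log ((n + 2 : ℝ) / (n + 1)) = Real.log (n + 2) - Real.log (n + 1) :=
      Real.log_div (by positivity) (by positivity)
    rw [hlog]
    push_cast
    rw [e2]
    rw [e3] at hkey
    nlinarith [ih, e1]

theorem s_r_neg (r : ℕ) (hr : 3 ≤ r) :
    ((r : ℝ) - 1) * Real.log ((r : ℝ) / ((r : ℝ) - 1)) +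
      2 * ((1 / ((r : ℝ) - 2)) * Real.log ((r - 2).factorial) - Real.log ((r : ℝ) - 1)) < 0 := by
  have hx : (3:ℝ) ≤ (r:ℝ) := by exact_mod_cast hr
  have h1 : (0:ℝ) < (r:ℝ) - 1 := by linarith
  have h2 : (0:ℝ) < (r:ℝ) - 2 := by linarith
  have hcast : ((r - 2 : ℕ) : ℝ) = (r:ℝ) - 2 := by
    have : 2 ≤ r := by omega
    push_cast [Nat.cast_sub this]; ring
  -- bound on factorial term
  have hf : Real.log ((r - 2).factorial) ≤ ((r:ℝ) - 2) * Real.log (((r:ℝ) - 1) / 2) := by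
    have := log_fact_le (r - 2)
    rw [hcast] at this
    convert this using 3
    ring
  have hdiv : (1 / ((r:ℝ) - 2)) * Real.log ((r - 2).factorial) ≤ Real.log (((r:ℝ) - 1) / 2) := by
    rw [div_mul_eq_mul_div, one_mul, div_le_iff₀ h2]
    linarith [hf]
  have elog : Real.log (((r:ℝ) - 1) / 2) = Real.log ((r:ℝ) - 1) - Real.log 2 :=
    Real.log_div (by linarith) (by norm_num)
  -- bound on first term
  have hratio : Real.log ((r:ℝ) / ((r:ℝ) - 1)) < 1 / ((r:ℝ) - 1) := by
    have hne : (r:ℝ) / ((r:ℝ) - 1) ≠ 1 := by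
      intro h
      rw [div_eq_one_iff_eq (by linarith)] at h
      linarith
    have := Real.log_lt_sub_one_of_pos (x := (r:ℝ) / ((r:ℝ) - 1)) (by positivity) hne
    have : Real.log ((r:ℝ) / ((r:ℝ) - 1)) < (r:ℝ) / ((r:ℝ) - 1) - 1 := this
    have heq : (r:ℝ) / ((r:ℝ) - 1) - 1 = 1 / ((r:ℝ) - 1) := by field_simp; ring
    linarith [heq ▸ this]
  have h1border : ((r:ℝ) - 1) * Real.log ((r:ℝ) / ((r:ℝ) - 1)) < 1 := by
    have := (mul_lt_mul_iff_right₀ h1).mpr hratio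
    have heq : ((r:ℝ) - 1) * (1 / ((r:ℝ) - 1)) = 1 := by field_simp
    linarith [heq ▸ this]
  have hlog2 : (0.6931471803 : ℝ) < Real.log 2 := Real.log_two_gt_d9
  nlinarith [hdiv, elog, h1border, hlog2]
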